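/- Let β_1, β_2, ... be iid Bernoulli(p) random variables and let γ = (c_i) be a nonnegative sequence summing to 1 with infinitely many nonzero terms. Then the random variable S_γ = Σ c_i β_i is non-atomic, i.e., P(S_γ = s) = 0 for every real s. -/

import Mathlib

open MeasureTheory ProbabilityTheory Filter

lemma aux_subsetsum (d : ℕ → ℝ) (hd : ∀ k, 0 ≤ d k) :
    ∀ G : Finset ℕ, (∀ k ∈ G, (∑ l ∈ G.filter (fun l => k < l), d l) < d k) →
    ∀ A B : Finset ℕ, A ⊆ G → B ⊆ G → (∑ i ∈ A, d i) = (∑ i ∈ B, d i) → A = B := by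
  intro G
  induction G using Finset.strongInduction with
  | _ G ih =>
    intro hsup A B hA hB hAB
    rcases G.eq_empty_or_nonempty with rfl | hGne
    · rw [Finset.subset_empty] at hA hB; rw [hA, hB]
    set k := G.min' hGne with hk
    have hkG : k ∈ G := G.min'_mem hGne
    have key : ∀ A B : Finset ℕ, A ⊆ G → B ⊆ G →
        (∑ i ∈ A, d i) = (∑ i ∈ B, d i) → k ∈ A → k ∉ B → False := by
      intro A B hA hB hAB hkA hkB
      have hBsub : B ⊆ G.filter (fun l => k < l) := by
        intro i hi
        refine Finset.mem_filter.2 ⟨hB hi, ?_⟩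
        exact lt_of_le_of_ne (G.min'_le i (hB hi)) (fun h => hkB (h ▸ hi))
      have h1 : (∑ i ∈ B, d i) ≤ ∑ l ∈ G.filter (fun l => k < l), d l :=
        Finset.sum_le_sum_of_subset_of_nonneg hBsub (fun i _ _ => hd i)
      have h2 : d k ≤ ∑ i ∈ A, d i := Finset.single_le_sum (fun i _ => hd i) hkA
      have := hsup k hkG
      linarith
    by_cases hkA : k ∈ A <;> by_cases hkB : k ∈ B
    · have hsub : G.erase k ⊂ G := Finset.erase_ssubset hkG
      have hsup' : ∀ k' ∈ G.erase k,
          (∑ l ∈ (G.erase k).filter (fun l => k' < l), d l) < d k' := by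
        intro k' hk'
        refine lt_of_le_of_lt ?_ (hsup k' (Finset.mem_of_mem_erase hk'))
        refine Finset.sum_le_sum_of_subset_of_nonneg ?_ (fun i _ _ => hd i)
        intro i hi
        rcases Finset.mem_filter.1 hi with ⟨hiG, hlt⟩
        exact Finset.mem_filter.2 ⟨Finset.mem_of_mem_erase hiG, hlt⟩
      have hsum : (∑ i ∈ A.erase k, d i) = ∑ i ∈ B.erase k, d i := by
        have hA' := Finset.add_sum_erase A d hkA
        have hB' := Finset.add_sum_erase B d hkB
        linarith [hA', hB']
      have := ih (G.erase k) hsub hsup' (A.erase k) (B.erase k)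
        (fun i hi => Finset.mem_erase.2 ⟨(Finset.mem_erase.1 hi).1,
          hA (Finset.mem_of_mem_erase hi)⟩)
        (fun i hi => Finset.mem_erase.2 ⟨(Finset.mem_erase.1 hi).1,
          hB (Finset.mem_of_mem_erase hi)⟩) hsum
      rw [← Finset.insert_erase hkA, ← Finset.insert_erase hkB, this]
    · exact absurd (key A B hA hB hAB hkA hkB) (fun h => h)
    · exact absurd (key B A hB hA hAB.symm hkB hkA) (fun h => h)
    · have hsub : G.erase k ⊂ G := Finset.erase_ssubset hkG
      have hsup' : ∀ k' ∈ G.erase k,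
          (∑ l ∈ (G.erase k).filter (fun l => k' < l), d l) < d k' := by
        intro k' hk'
        refine lt_of_le_of_lt ?_ (hsup k' (Finset.mem_of_mem_erase hk'))
        refine Finset.sum_le_sum_of_subset_of_nonneg ?_ (fun i _ _ => hd i)
        intro i hi
        rcases Finset.mem_filter.1 hi with ⟨hiG, hlt⟩
        exact Finset.mem_filter.2 ⟨Finset.mem_of_mem_erase hiG, hlt⟩
      exact ih (G.erase k) hsub hsup' A B
        ((Finset.subset_erase).2 ⟨hA, hkA⟩) ((Finset.subset_erase).2 ⟨hB, hkB⟩) hAB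

lemma aux_tail (d : ℕ → ℝ) (hpos : ∀ k, 0 < d k) (hhalf : ∀ k, d (k+1) < d k / 2) :
    ∀ n k, (∑ l ∈ Finset.Ico (k+1) (k+1+n), d l) < d k := by
  intro n
  induction n with
  | zero => intro k; simp [hpos k]
  | succ n ih =>
    intro k
    have h1 : (k+1) < (k+1) + (n+1) := by omega
    rw [Finset.sum_eq_sum_Ico_succ_bot h1]
    have h2 : k + 1 + (n + 1) = (k + 1 + 1) + n := by omega
    rw [h2]
    have h3 := ih (k+1)
    have h4 := hhalf k
    linarith

noncomputable def chooseSeq (c : ℕ → ℝ)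
    (key : ∀ ε : ℝ, 0 < ε → ∃ i, 0 < c i ∧ c i < ε) : ℕ → {x : ℕ // 0 < c x}
  | 0 => ⟨(key 1 one_pos).choose, (key 1 one_pos).choose_spec.1⟩
  | n+1 =>
    let p := chooseSeq c key n
    ⟨(key (c p.1 / 2) (half_pos p.2)).choose,
      (key (c p.1 / 2) (half_pos p.2)).choose_spec.1⟩

lemma chooseSeq_half (c : ℕ → ℝ) (key : ∀ ε : ℝ, 0 < ε → ∃ i, 0 < c i ∧ c i < ε) (n : ℕ) :
    c (chooseSeq c key (n+1)).1 < c (chooseSeq c key n).1 / 2 :=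
  (key (c (chooseSeq c key n).1 / 2) (half_pos (chooseSeq c key n).2)).choose_spec.2

noncomputable def sigAlg {Ω : Type*} (β : ℕ → Ω → ℝ) (t : Set ℕ) : MeasurableSpace Ω :=
  ⨆ i ∈ t, MeasurableSpace.comap (β i) inferInstance

theorem infinite_convex_combination_nonatomic {Ω : Type*} [MeasurableSpace Ω]
    (μ : Measure Ω) [IsProbabilityMeasure μ] (p : ℝ) (hp0 : 0 < p) (hp1 : p < 1)
    (β : ℕ → Ω → ℝ) (hmeas : ∀ i, Measurable (β i))
    (hval : ∀ i ω, β i ω = 0 ∨ β i ω = 1)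
    (hβp : ∀ i, μ {ω | β i ω = 1} = ENNReal.ofReal p)
    (hindep : iIndepFun β μ)
    (c : ℕ → ℝ) (hc0 : ∀ i, 0 ≤ c i) (hc1 : (∑' i, c i) = 1)
    (hinf : {i | c i ≠ 0}.Infinite) :
    ∀ s : ℝ, μ {ω | (∑' i, c i * β i ω) = s} = 0 := by
  classical
  intro s
  have hβ0 : ∀ i ω, 0 ≤ β i ω := by
    intro i ω; rcases hval i ω with h | h <;> rw [h] <;> norm_num
  have hβle : ∀ i ω, β i ω ≤ 1 := by
    intro i ω; rcases hval i ω with h | h <;> rw [h] <;> norm_num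
  have hsumc : Summable c := by
    by_contra h
    rw [tsum_eq_zero_of_not_summable h] at hc1
    norm_num at hc1
  have hsumf : ∀ ω, Summable (fun i => c i * β i ω) := by
    intro ω
    refine hsumc.of_nonneg_of_le (fun i => mul_nonneg (hc0 i) (hβ0 i ω)) (fun i => ?_)
    calc c i * β i ω ≤ c i * 1 := mul_le_mul_of_nonneg_left (hβle i ω) (hc0 i)
    _ = c i := mul_one _
  have key : ∀ ε : ℝ, 0 < ε → ∃ i, 0 < c i ∧ c i < ε := by
    intro ε hε
    have hev : ∀ᶠ i in atTop, c i < ε := hsumc.tendsto_atTop_zero.eventually (gt_mem_nhds hε)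
    rw [← Nat.cofinite_eq_atTop, Filter.eventually_cofinite] at hev
    obtain ⟨i, hi⟩ := (hinf.diff hev).nonempty
    exact ⟨i, lt_of_le_of_ne (hc0 i) (Ne.symm hi.1), not_not.1 hi.2⟩
  set j : ℕ → ℕ := fun k => (chooseSeq c key k).1 with hj
  have hjpos : ∀ k, 0 < c (j k) := fun k => (chooseSeq c key k).2
  have hjhalf : ∀ k, c (j (k+1)) < c (j k) / 2 := fun k => chooseSeq_half c key k
  have hanti : StrictAnti (fun k => c (j k)) :=
    strictAnti_nat_of_succ_lt (fun k => lt_of_lt_of_le (hjhalf k) (by linarith [hjpos k]))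
  have hjinj : Function.Injective j := by
    intro a b hab
    exact hanti.injective (by simp only [hab])
  have hinvj : ∀ k, Function.invFun j (j k) = k := fun k => Function.leftInverse_invFun hjinj k
  set m : ℝ := max p (1 - p) with hm
  have hm1 : m < 1 := max_lt hp1 (by linarith)
  set M : ENNReal := ENNReal.ofReal m with hM
  have hM1 : M < 1 := by
    rw [hM, ← ENNReal.ofReal_one]
    exact (ENNReal.ofReal_lt_ofReal_iff one_pos).2 hm1
  suffices hbound : ∀ n : ℕ, μ {ω | (∑' i, c i * β i ω) = s} ≤ M ^ n by
    have h0 : Tendsto (fun n => M ^ n) atTop (nhds 0) :=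
      ENNReal.tendsto_pow_atTop_nhds_zero_of_lt_one hM1
    exact le_antisymm (ge_of_tendsto' h0 hbound) zero_le
  intro n
  set d : ℕ → ℝ := fun k => c (j k) with hd
  set F : Finset ℕ := (Finset.range n).image j with hF
  have hsup : ∀ k ∈ Finset.range n,
      (∑ l ∈ (Finset.range n).filter (fun l => k < l), d l) < d k := by
    intro k _
    have hfe : (Finset.range n).filter (fun l => k < l) ⊆ Finset.Ico (k+1) (k+1+n) := by
      intro l hl
      rcases Finset.mem_filter.1 hl with ⟨hl1, hl2⟩
      rw [Finset.mem_range] at hl1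
      rw [Finset.mem_Ico]
      omega
    refine lt_of_le_of_lt (Finset.sum_le_sum_of_subset_of_nonneg hfe
      (fun i _ _ => (hjpos i).le)) ?_
    exact aux_tail d hjpos hjhalf n k
  -- value of a subset
  set v : Finset ℕ → ℝ := fun A => ∑ k ∈ A, d k with hv
  have hvinj : ∀ A ∈ (Finset.range n).powerset, ∀ B ∈ (Finset.range n).powerset,
      v A = v B → A = B := by
    intro A hA B hB hAB
    exact aux_subsetsum d (fun k => (hjpos k).le) (Finset.range n) hsup A B
      (Finset.mem_powerset.1 hA) (Finset.mem_powerset.1 hB) hAB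
  -- remainder
  set R : Ω → ℝ := fun ω => ∑' i, if i ∈ F then 0 else c i * β i ω with hR
  have hsplit : ∀ ω, (∑' i, c i * β i ω) = (∑ i ∈ F, c i * β i ω) + R ω := by
    intro ω
    rw [← Summable.sum_add_tsum_subtype_compl (hsumf ω) F]
    congr 1
    have h1 : (fun i => if i ∈ F then 0 else c i * β i ω)
        = Set.indicator {x : ℕ | x ∉ F} (fun i => c i * β i ω) := by
      funext i
      by_cases hiF : i ∈ F <;> simp [Set.indicator, hiF]
    have h2 : R ω = ∑' (x : {x : ℕ | x ∉ F}), c x.1 * β x.1 ω := by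
      show (∑' i, if i ∈ F then 0 else c i * β i ω) = _
      rw [h1, ← tsum_subtype]
    rw [h2]
    rfl
  -- sigma algebras
  have hIndep : Indep (sigAlg β ↑F) (sigAlg β (↑F : Set ℕ)ᶜ) μ :=
    indep_biSup_compl (s := fun i => MeasurableSpace.comap (β i) inferInstance)
      (fun i => (hmeas i).comap_le) hindep.iIndep (↑F : Set ℕ)
  have hβmeas₂ : ∀ i ∉ F, Measurable[sigAlg β (↑F : Set ℕ)ᶜ] (β i) := by
    intro i hi
    refine Measurable.of_comap_le ?_
    exact le_iSup₂ (f := fun i' (_ : i' ∈ (↑F : Set ℕ)ᶜ) =>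
      MeasurableSpace.comap (β i') inferInstance) i hi
  have hRmeas₂ : Measurable[sigAlg β (↑F : Set ℕ)ᶜ] R := by
    have hterm : ∀ i,
        Measurable[sigAlg β (↑F : Set ℕ)ᶜ] (fun ω => if i ∈ F then 0 else c i * β i ω) := by
      intro i
      by_cases hiF : i ∈ F
      · simp only [if_pos hiF]; exact measurable_const
      · simp only [if_neg hiF]
        exact ((hβmeas₂ i hiF).const_mul (c i))
    refine @measurable_of_tendsto_metrizable Ω ℝ (sigAlg β (↑F : Set ℕ)ᶜ) _ _ _ _
      (fun N ω => ∑ i ∈ Finset.range N, if i ∈ F then 0 else c i * β i ω) R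
      (fun N => Finset.measurable_sum _ (fun i _ => hterm i)) ?_
    rw [tendsto_pi_nhds]
    intro ω
    have hs : Summable (fun i => if i ∈ F then 0 else c i * β i ω) := by
      refine hsumc.of_nonneg_of_le (fun i => ?_) (fun i => ?_)
      · by_cases hiF : i ∈ F <;>
          simp [hiF, mul_nonneg (hc0 i) (hβ0 i ω)]
      · by_cases hiF : i ∈ F
        · simp [hiF, hc0 i]
        · simp only [if_neg hiF]
          calc c i * β i ω ≤ c i * 1 := mul_le_mul_of_nonneg_left (hβle i ω) (hc0 i)
          _ = c i := mul_one _
    exact hs.hasSum.tendsto_sum_nat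
  have hRmeas : Measurable R :=
    hRmeas₂.mono (iSup₂_le fun i _ => (hmeas i).comap_le) le_rfl
  -- events
  set χ : Finset ℕ → ℕ → ℝ := fun A k => if k ∈ A then 1 else 0 with hχ
  set x : Finset ℕ → ℕ → ℝ := fun A i => χ A (Function.invFun j i) with hx
  set G : Finset ℕ → Set Ω := fun A => ⋂ i ∈ F, β i ⁻¹' {x A i} with hG
  set B : Finset ℕ → Set Ω := fun A => R ⁻¹' {s - v A} with hB
  -- cover
  have hcover : {ω | (∑' i, c i * β i ω) = s}
      ⊆ ⋃ A ∈ (Finset.range n).powerset, (G A ∩ B A) := by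
    intro ω hω
    have hωs : (∑' i, c i * β i ω) = s := hω
    set A : Finset ℕ := (Finset.range n).filter (fun k => β (j k) ω = 1) with hA
    have hAmem : A ∈ (Finset.range n).powerset :=
      Finset.mem_powerset.2 (Finset.filter_subset _ _)
    refine Set.mem_biUnion hAmem ⟨?_, ?_⟩
    · refine Set.mem_iInter₂.2 (fun i hi => ?_)
      obtain ⟨k, hk, rfl⟩ := Finset.mem_image.1 hi
      show ω ∈ β (j k) ⁻¹' {x A (j k)}
      have hxk : x A (j k) = χ A k := by simp only [hx, hinvj k]
      rw [Set.mem_preimage, Set.mem_singleton_iff, hxk]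
      show β (j k) ω = if k ∈ A then 1 else 0
      rcases hval (j k) ω with h0 | h1
      · have hkA : k ∉ A := by
          rw [hA, Finset.mem_filter]
          rintro ⟨-, h⟩
          rw [h0] at h; norm_num at h
        rw [if_neg hkA, h0]
      · have hkA : k ∈ A := by rw [hA, Finset.mem_filter]; exact ⟨hk, h1⟩
        rw [if_pos hkA, h1]
    · show ω ∈ R ⁻¹' {s - v A}
      rw [Set.mem_preimage, Set.mem_singleton_iff]
      have hFsum : (∑ i ∈ F, c i * β i ω) = v A := by
        have e1 : (∑ i ∈ F, c i * β i ω) = ∑ k ∈ Finset.range n, c (j k) * β (j k) ω := by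
          show (∑ i ∈ (Finset.range n).image j, c i * β i ω) = _
          rw [Finset.sum_image (fun a _ b _ hab => hjinj hab)]
        have e2 : v A = ∑ k ∈ Finset.range n, if β (j k) ω = 1 then d k else 0 := by
          show (∑ k ∈ (Finset.range n).filter (fun k => β (j k) ω = 1), d k) = _
          rw [Finset.sum_filter]
        rw [e1, e2]
        refine Finset.sum_congr rfl (fun k _ => ?_)
        rcases hval (j k) ω with h0 | h1
        · rw [if_neg (by rw [h0]; norm_num : ¬ β (j k) ω = 1), h0, mul_zero]
        · rw [if_pos h1, h1, mul_one]
      have := hsplit ω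
      rw [hωs, hFsum] at this
      linarith
  -- disjointness of the B's
  have hBdisj : Set.PairwiseDisjoint ↑((Finset.range n).powerset) B := by
    intro A hA A' hA' hne
    refine Set.disjoint_left.2 (fun ω hω hω' => hne ?_)
    have h1 : R ω = s - v A := hω
    have h2 : R ω = s - v A' := hω'
    have : v A = v A' := by linarith [h1 ▸ h2]
    exact hvinj A hA A' hA' this
  have hBmeas : ∀ A, MeasurableSet (B A) := fun A => hRmeas (measurableSet_singleton _)
  have hsumB : (∑ A ∈ (Finset.range n).powerset, μ (B A)) ≤ 1 := by
    refine le_trans (le_of_eq (measure_biUnion_finset (μ := μ) hBdisj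
      (fun A _ => hBmeas A)).symm) prob_le_one
  -- independence product
  have hGmeas₁ : ∀ A, MeasurableSet[sigAlg β (↑F : Set ℕ)] (G A) := by
    intro A
    refine MeasurableSet.biInter (Finset.countable_toSet F) (fun i hi => ?_)
    have hle : MeasurableSpace.comap (β i) inferInstance ≤ sigAlg β (↑F : Set ℕ) :=
      le_iSup₂ (f := fun i' (_ : i' ∈ (↑F : Set ℕ)) =>
        MeasurableSpace.comap (β i') inferInstance) i hi
    exact hle _ ⟨{x A i}, measurableSet_singleton _, rfl⟩
  have hBmeas₂ : ∀ A, MeasurableSet[sigAlg β (↑F : Set ℕ)ᶜ] (B A) :=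
    fun A => hRmeas₂ (measurableSet_singleton _)
  have hprod : ∀ A, μ (G A ∩ B A) = μ (G A) * μ (B A) := by
    intro A
    exact (Indep_iff _ _ _).1 hIndep _ _ (hGmeas₁ A) (hBmeas₂ A)
  -- bound on μ (G A)
  have hsingle : ∀ (i : ℕ) (val : ℝ), val = 0 ∨ val = 1 → μ (β i ⁻¹' {val}) ≤ M := by
    intro i val hvl
    have hone : β i ⁻¹' {(1 : ℝ)} = {ω | β i ω = 1} := by ext ω; simp
    rcases hvl with rfl | rfl
    · have hzero : β i ⁻¹' {(0 : ℝ)} = {ω | β i ω = 1}ᶜ := by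
        ext ω
        simp only [Set.mem_preimage, Set.mem_singleton_iff, Set.mem_compl_iff, Set.mem_setOf_eq]
        constructor
        · intro h0 h1
          rw [h0] at h1
          norm_num at h1
        · intro h1
          rcases hval i ω with h | h
          · exact h
          · exact absurd h h1
      have hms : MeasurableSet {ω | β i ω = 1} := by
        rw [← hone]
        exact (hmeas i) (measurableSet_singleton (1 : ℝ))
      rw [hzero, measure_compl hms (measure_ne_top μ _), hβp i, measure_univ]
      have : (1 : ENNReal) - ENNReal.ofReal p = ENNReal.ofReal (1 - p) := by
        rw [ENNReal.ofReal_sub _ hp0.le, ENNReal.ofReal_one]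
      rw [this, hM]
      exact ENNReal.ofReal_le_ofReal (le_max_right _ _)
    · rw [hone, hβp i, hM]
      exact ENNReal.ofReal_le_ofReal (le_max_left _ _)
  have hGle : ∀ A, μ (G A) ≤ M ^ n := by
    intro A
    have hcard : F.card = n := by
      rw [hF, Finset.card_image_of_injective _ hjinj, Finset.card_range]
    have heq : μ (G A) = ∏ i ∈ F, μ (β i ⁻¹' {x A i}) := by
      rw [hG]
      exact hindep.meas_biInter (fun i _ => ⟨{x A i}, measurableSet_singleton _, rfl⟩)
    rw [heq, ← hcard, ← Finset.prod_const]
    refine Finset.prod_le_prod' (fun i _ => hsingle i (x A i) ?_)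
    by_cases h : Function.invFun j i ∈ A
    · right
      show (if Function.invFun j i ∈ A then (1:ℝ) else 0) = 1
      rw [if_pos h]
    · left
      show (if Function.invFun j i ∈ A then (1:ℝ) else 0) = 0
      rw [if_neg h]
  -- final chain
  calc μ {ω | (∑' i, c i * β i ω) = s}
      ≤ μ (⋃ A ∈ (Finset.range n).powerset, (G A ∩ B A)) := measure_mono hcover
    _ ≤ ∑ A ∈ (Finset.range n).powerset, μ (G A ∩ B A) := measure_biUnion_finset_le _ _
    _ = ∑ A ∈ (Finset.range n).powerset, μ (G A) * μ (B A) :=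
        Finset.sum_congr rfl (fun A _ => hprod A)
    _ ≤ ∑ A ∈ (Finset.range n).powerset, M ^ n * μ (B A) :=
        Finset.sum_le_sum (fun A _ => mul_le_mul_left (hGle A) _)
    _ = M ^ n * ∑ A ∈ (Finset.range n).powerset, μ (B A) := by rw [Finset.mul_sum]
    _ ≤ M ^ n * 1 := mul_le_mul_right hsumB _
    _ = M ^ n := mul_one _
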